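/- arXiv:1311.1146 — 3 statements merged into one kernel-verified Lean document; each statement's English description precedes it below -/
import Mathlib

section
/- Let A be a type equipped with a Maltsev operation p : A → A → A → A, i.e., p x x y = y and p x y y = x for all x, y ∈ A. Let R and R' be equivalence relations on A, each compatible with p. Then R and R' permute: for all x, z ∈ A, (∃ y, R x y ∧ R' y z) ↔ (∃ y, R' x y ∧ R y z). -/
/-- Two equivalence relations compatible with a Maltsev operation permute. -/
theorem maltsev_equivalences_permute
    {A : Type*} (p : A → A → A → A)
    (hp₁ : ∀ x y : A, p x x y = y) (hp₂ : ∀ x y : A, p x y y = x)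
    (R R' : A → A → Prop) (hR : Equivalence R) (hR' : Equivalence R')
    (hcompatR : ∀ a a' b b' c c' : A,
      R a a' → R b b' → R c c' → R (p a b c) (p a' b' c'))
    (hcompatR' : ∀ a a' b b' c c' : A,
      R' a a' → R' b b' → R' c c' → R' (p a b c) (p a' b' c')) :
    ∀ x z : A, (∃ y, R x y ∧ R' y z) ↔ (∃ y, R' x y ∧ R y z) := by
  intro x z
  constructor
  · rintro ⟨y, hxy, hyz⟩
    refine ⟨p x y z, ?_, ?_⟩
    · have := hcompatR' x x y y z y (hR'.refl x) (hR'.refl y) (hR'.symm hyz)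
      rw [hp₂] at this
      exact hR'.symm this
    · have := hcompatR x y y y z z hxy (hR.refl y) (hR.refl z)
      rw [hp₁] at this
      exact this
  · rintro ⟨y, hxy, hyz⟩
    refine ⟨p x y z, ?_, ?_⟩
    · have := hcompatR x x y y z y (hR.refl x) (hR.refl y) (hR.symm hyz)
      rw [hp₂] at this
      exact hR.symm this
    · have := hcompatR' x y y y z z hxy (hR'.refl y) (hR'.refl z)
      rw [hp₁] at this
      exact this
end

section
/- Let X and Q be topological spaces, let pX : X → X → X → X be a Maltsev operation on X (pX x x y = y and pX x y y = x) which is continuous as a map X × X × X → X, let pQ : Q → Q → Q → Q be any ternary operation on Q, and let q : X → Q be a map commuting with the operations: q (pX x y z) = pQ (q x) (q y) (q z) for all x, y, z. Then for every open set U ⊆ X the set q⁻¹(q(U)) is open in X; consequently, if q is a quotient map, then q is an open map. -/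
/-- If `q : X → Q` commutes with a continuous Maltsev operation on `X` (and any
ternary operation on `Q`), then saturations of open sets are open; consequently
every such quotient map is open. -/
theorem maltsev_quotient_map_is_open
    {X Q : Type*} [TopologicalSpace X] [TopologicalSpace Q]
    (pX : X → X → X → X)
    (hp₁ : ∀ x y : X, pX x x y = y) (hp₂ : ∀ x y : X, pX x y y = x)
    (hpcont : Continuous fun t : X × X × X => pX t.1 t.2.1 t.2.2)
    (pQ : Q → Q → Q → Q) (q : X → Q)
    (hq : ∀ x y z : X, q (pX x y z) = pQ (q x) (q y) (q z)) :
    (∀ U : Set X, IsOpen U → IsOpen (q ⁻¹' (q '' U))) ∧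
    (Topology.IsQuotientMap q → IsOpenMap q) := by
  have main : ∀ U : Set X, IsOpen U → IsOpen (q ⁻¹' (q '' U)) := by
    intro U hU
    rw [isOpen_iff_mem_nhds]
    intro x hx
    obtain ⟨u, hu, hux⟩ := hx
    have hcont : Continuous fun z : X => pX z x u := by
      have : (fun z : X => pX z x u) =
          (fun t : X × X × X => pX t.1 t.2.1 t.2.2) ∘ (fun z => (z, x, u)) := rfl
      rw [this]
      exact hpcont.comp (by continuity)
    have hVopen : IsOpen {z : X | pX z x u ∈ U} := hU.preimage hcont
    have hxV : x ∈ {z : X | pX z x u ∈ U} := by simp [hp₁, hu]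
    refine Filter.mem_of_superset (hVopen.mem_nhds hxV) ?_
    intro z hz
    refine ⟨pX z x u, hz, ?_⟩
    calc q (pX z x u) = pQ (q z) (q x) (q u) := hq z x u
      _ = pQ (q z) (q u) (q u) := by rw [hux]
      _ = q (pX z u u) := (hq z u u).symm
      _ = q z := by rw [hp₂]
  refine ⟨main, fun hquot => ?_⟩
  intro U hU
  rw [← hquot.isOpen_preimage]
  exact main U hU
end

section
/- (Barr–Kock Theorem) Let C be a category with pullbacks. Let f : X ⟶ Y, f' : X' ⟶ Y', g : X ⟶ X', h : Y ⟶ Y' be morphisms with h ∘ f = f' ∘ g. Let (R, π₁, π₂) and (R', π₁', π₂') be the kernel pairs of f and f' respectively, and let γ : R ⟶ R' be the induced morphism satisfying π₁' ∘ γ = g ∘ π₁ and π₂' ∘ γ = g ∘ π₂. Assume that the square with sides γ, π₁, π₁', g is a pullback, and that f is a strong epimorphism all of whose pullbacks along arbitrary morphisms are strong epimorphisms. Then: (1) the square with sides f, g, h, f' is a pullback; (2) if moreover g is a monomorphism, then h is a monomorphism. -/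
open CategoryTheory CategoryTheory.Limits

/-- Barr–Kock theorem: given a commutative square `h ∘ f = f' ∘ g` and the induced
morphism `γ` between the kernel pairs of `f` and `f'`, if the square `(γ, π₁, π₁', g)`
is a pullback and `f` is a pullback-stable strong epimorphism, then the original
square is a pullback; if moreover `g` is a monomorphism, so is `h`. -/
theorem barr_kock
    {C : Type*} [Category C] [HasPullbacks C]
    {X Y X' Y' : C} (f : X ⟶ Y) (f' : X' ⟶ Y') (g : X ⟶ X') (h : Y ⟶ Y')
    (hcomm : f ≫ h = g ≫ f')
    (γ : pullback f f ⟶ pullback f' f')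
    (hγ₁ : γ ≫ pullback.fst f' f' = pullback.fst f f ≫ g)
    (hγ₂ : γ ≫ pullback.snd f' f' = pullback.snd f f ≫ g)
    (hpb : IsPullback γ (pullback.fst f f) (pullback.fst f' f') g)
    (hstrong : StrongEpi f)
    (hstab : ∀ {W : C} (u : W ⟶ Y), StrongEpi (pullback.snd f u)) :
    IsPullback f g h f' ∧ (Mono g → Mono h) := by
  -- `t : X ⟶ pullback h f'` is the comparison map; we show it is an iso.
  let t : X ⟶ pullback h f' := pullback.lift f g hcomm
  have ht₁ : t ≫ pullback.fst h f' = f := pullback.lift_fst _ _ _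
  have ht₂ : t ≫ pullback.snd h f' = g := pullback.lift_snd _ _ _
  -- the auxiliary map θ from the kernel pair of f to pullback h f'
  have hθw : (pullback.fst f f ≫ f) ≫ h = (pullback.snd f f ≫ g) ≫ f' := by
    rw [Category.assoc, pullback.condition_assoc, hcomm, Category.assoc]
  let θ : pullback f f ⟶ pullback h f' := pullback.lift _ _ hθw
  have hθ₁ : θ ≫ pullback.fst h f' = pullback.fst f f ≫ f := pullback.lift_fst _ _ _
  have hθ₂ : θ ≫ pullback.snd h f' = pullback.snd f f ≫ g := pullback.lift_snd _ _ _
  -- the big rectangle is a pullback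
  have big : IsPullback (γ ≫ pullback.snd f' f') (pullback.fst f f) f' (g ≫ f') :=
    hpb.paste_horiz (IsPullback.of_hasPullback f' f').flip
  -- hence the square (θ, π₁, fst, f) is a pullback
  have S1 : IsPullback θ (pullback.fst f f) (pullback.fst h f') f := by
    refine IsPullback.of_right ?_ hθ₁ (IsPullback.of_hasPullback h f').flip
    have e : θ ≫ pullback.snd h f' = γ ≫ pullback.snd f' f' := by rw [hθ₂, hγ₂]
    rw [e, hcomm]
    exact big
  -- θ is a strong epi by stability
  haveI : StrongEpi (pullback.snd f (pullback.fst h f')) := hstab _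
  haveI hθse : StrongEpi θ := by
    rw [← S1.flip.isoPullback_hom_snd]
    exact strongEpi_comp _ _
  -- θ = π₂ ≫ t, hence t is a strong epi
  have hθt : pullback.snd f f ≫ t = θ := by
    apply pullback.hom_ext
    · rw [Category.assoc, ht₁, hθ₁, ← pullback.condition]
    · rw [Category.assoc, ht₂, hθ₂]
  haveI hts : StrongEpi t := by
    rw [← hθt] at hθse
    exact strongEpi_of_strongEpi (pullback.snd f f) t
  -- t is a mono
  haveI htm : Mono t := by
    constructor
    intro Z a b hab
    have haf : a ≫ f = b ≫ f := by
      rw [← ht₁, ← Category.assoc, hab, Category.assoc]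
    have hag : a ≫ g = b ≫ g := by
      rw [← ht₂, ← Category.assoc, hab, Category.assoc]
    let r : Z ⟶ pullback f f := pullback.lift a b haf
    let r' : Z ⟶ pullback f f := pullback.lift a a rfl
    have hrr : r = r' := by
      apply hpb.hom_ext
      · apply pullback.hom_ext
        · rw [Category.assoc, Category.assoc, hγ₁, ← Category.assoc, ← Category.assoc]
          show (pullback.lift a b haf ≫ pullback.fst f f) ≫ g = (pullback.lift a a rfl ≫ pullback.fst f f) ≫ g
          rw [pullback.lift_fst, pullback.lift_fst]
        · rw [Category.assoc, Category.assoc, hγ₂, ← Category.assoc, ← Category.assoc]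
          show (pullback.lift a b haf ≫ pullback.snd f f) ≫ g = (pullback.lift a a rfl ≫ pullback.snd f f) ≫ g
          rw [pullback.lift_snd, pullback.lift_snd, hag]
      · show pullback.lift a b haf ≫ pullback.fst f f = pullback.lift a a rfl ≫ pullback.fst f f
        rw [pullback.lift_fst, pullback.lift_fst]
    have : r ≫ pullback.snd f f = r' ≫ pullback.snd f f := by rw [hrr]
    have this' : pullback.lift a a rfl ≫ pullback.snd f f = pullback.lift a b haf ≫ pullback.snd f f := this.symm
    rw [pullback.lift_snd, pullback.lift_snd] at this'
    exact this'
  haveI : IsIso t := isIso_of_mono_of_strongEpi t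
  have hP : IsPullback f g h f' :=
    IsPullback.of_iso_pullback ⟨hcomm⟩ (asIso t) ht₁ ht₂
  refine ⟨hP, fun hg => ?_⟩
  constructor
  intro Z a b hab
  -- pull back f along a
  haveI := hstab a
  haveI : Epi (pullback.snd f a) := (hstab a).epi
  set p := pullback.fst f a
  set q := pullback.snd f a
  have hpq : p ≫ f = q ≫ a := pullback.condition
  have w : (q ≫ b) ≫ h = (p ≫ g) ≫ f' := by
    rw [Category.assoc, ← hab, ← Category.assoc, ← hpq, Category.assoc, hcomm,
      ← Category.assoc]
  let l : pullback f a ⟶ X := hP.lift (q ≫ b) (p ≫ g) w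
  have hl₁ : l ≫ f = q ≫ b := hP.lift_fst _ _ _
  have hl₂ : l ≫ g = p ≫ g := hP.lift_snd _ _ _
  have hlp : l = p := by
    haveI := hg
    exact (cancel_mono g).mp hl₂
  have : q ≫ a = q ≫ b := by rw [← hpq, ← hlp, hl₁]
  exact (cancel_epi q).mp this
end
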